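/- Let m ≥ 1, let Q be the free abelian group with basis q₁, …, q_m, t, and let R = ℤQ be its integral group ring. Let M be the quotient of the free R-module on generators w₁, …, w_m by the submodule generated by the elements (q_j⁻¹ − 1)·w_i − (q_i⁻¹ − 1)·w_j for all 1 ≤ i, j ≤ m. Then the annihilator of M in R is zero. -/

import Mathlib

noncomputable section

/-- The free abelian group on `q₁, …, q_m, t`. -/
abbrev Q9 (m : ℕ) : Type := FreeAbelianGroup (Fin m ⊕ Unit)

/-- Its integral group ring `R = ℤQ`. -/
abbrev R9 (m : ℕ) : Type := AddMonoidAlgebra ℤ (Q9 m)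

/-- The image of `qᵢ⁻¹` in the group ring. -/
abbrev qinv (m : ℕ) (i : Fin m) : R9 m :=
  AddMonoidAlgebra.of' ℤ (Q9 m) (-(FreeAbelianGroup.of (Sum.inl i : Fin m ⊕ Unit)))

/-- The relations `(q_j⁻¹ − 1)·w_i − (q_i⁻¹ − 1)·w_j`. -/
def rel9 (m : ℕ) : Set (Fin m →₀ R9 m) :=
  {z | ∃ i j : Fin m,
    z = Finsupp.single i (qinv m j - 1) - Finsupp.single j (qinv m i - 1)}

/-- The quotient module `M`. -/
abbrev M9 (m : ℕ) : Type := (Fin m →₀ R9 m) ⧸ Submodule.span (R9 m) (rel9 m)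

instance (m : ℕ) : UniqueSums (Q9 m) :=
  UniqueSums.of_injective_addHom (FreeAbelianGroup.equivFinsupp (Fin m ⊕ Unit) :
    Q9 m →+ ((Fin m ⊕ Unit) →₀ ℤ)).toAddHom
    (FreeAbelianGroup.equivFinsupp _).injective inferInstance

lemma qof_ne_zero (m : ℕ) (i : Fin m) :
    (-(FreeAbelianGroup.of (Sum.inl i : Fin m ⊕ Unit)) : Q9 m) ≠ 0 := by
  intro h
  have := congrArg (FreeAbelianGroup.lift (fun _ : Fin m ⊕ Unit => (1 : ℤ))) h
  simp [FreeAbelianGroup.lift_apply_of] at this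

lemma qinv_sub_one_ne (m : ℕ) (i : Fin m) : qinv m i - 1 ≠ 0 := by
  intro h
  have h0 := congrArg (fun f : R9 m => f.coeff 0) (sub_eq_zero.mp h)
  simp only [AddMonoidAlgebra.of'_apply, AddMonoidAlgebra.one_def, AddMonoidAlgebra.coeff_single] at h0
  rw [Finsupp.single_eq_of_ne' (qof_ne_zero m i), Finsupp.single_eq_same] at h0
  exact zero_ne_one h0

/-- The annihilator of `M` in `R = ℤQ` is zero. -/
theorem statement9 (m : ℕ) (hm : 1 ≤ m) (r : R9 m)
    (hr : ∀ x : M9 m, r • x = 0) : r = 0 := by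
  set i0 : Fin m := ⟨0, hm⟩
  set φ : (Fin m →₀ R9 m) →ₗ[R9 m] R9 m :=
    Finsupp.linearCombination (R9 m) (fun i => qinv m i - 1) with hφ
  have hker : Submodule.span (R9 m) (rel9 m) ≤ LinearMap.ker φ := by
    rw [Submodule.span_le]
    rintro z ⟨i, j, rfl⟩
    simp only [SetLike.mem_coe, LinearMap.mem_ker, map_sub, φ,
      Finsupp.linearCombination_single, smul_eq_mul]
    ring
  set ψ : M9 m →ₗ[R9 m] R9 m := Submodule.liftQ _ φ hker with hψ
  have := hr (Submodule.Quotient.mk (Finsupp.single i0 1))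
  have h2 := congrArg ψ this
  rw [map_smul, map_zero] at h2
  have h3 : ψ (Submodule.Quotient.mk (Finsupp.single i0 1)) = qinv m i0 - 1 := by
    simp [ψ, φ, Submodule.liftQ_apply, Finsupp.linearCombination_single]
  rw [h3, smul_eq_mul] at h2
  rcases mul_eq_zero.mp h2 with h | h
  · exact h
  · exact absurd h (qinv_sub_one_ne m i0)

end
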